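/- There exists a real constant C ≥ 1 such that for all real numbers E > 0, u ≥ 0, v ≥ 0, and all real x with 0 ≤ x and x·√E ≤ 1, one has ∑_{k=3}^{∞} x^k · (k‼) / ((⌊k/8⌋)!)^8 · (E^((k−1)/2)·u + E^((k−2)/2)·v) ≤ C · x^3 · (E·u + √E·v). -/
import Mathlib

open scoped Nat

private lemma dfac_le_succ : ∀ n : ℕ, Nat.doubleFactorial n ≤ Nat.doubleFactorial (n + 1)
  | 0 => le_refl _
  | 1 => by decide
  | (n + 2) => by
    rw [Nat.doubleFactorial_add_two, show n + 2 + 1 = (n + 1) + 2 from rfl,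
      Nat.doubleFactorial_add_two]
    exact Nat.mul_le_mul (by omega) (dfac_le_succ n)

private lemma dfac_sq_le (n : ℕ) :
    Nat.doubleFactorial n * Nat.doubleFactorial n ≤ (n + 1)! := by
  rw [Nat.factorial_eq_mul_doubleFactorial]
  exact Nat.mul_le_mul_right _ (dfac_le_succ n)

private lemma fact_add_le : ∀ (m r : ℕ), (m + r)! ≤ (m + r) ^ r * m !
  | m, 0 => by simp
  | m, r + 1 => by
    rw [show m + (r + 1) = (m + r) + 1 from rfl, Nat.factorial_succ]
    calc (m + r + 1) * (m + r)! ≤ (m + r + 1) * ((m + r) ^ r * m !) :=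
          Nat.mul_le_mul_left _ (fact_add_le m r)
      _ ≤ (m + r + 1) * ((m + r + 1) ^ r * m !) := by
          have h : (m + r) ^ r ≤ (m + r + 1) ^ r := Nat.pow_le_pow_left (by omega) r
          exact Nat.mul_le_mul_left _ (Nat.mul_le_mul_right _ h)
      _ = (m + r + 1) ^ (r + 1) * m ! := by ring

private lemma fact8 : ∀ q : ℕ, (8 * q)! ≤ 8 ^ (8 * q) * (q !) ^ 8 := by
  intro q
  induction q with
  | zero => simp
  | succ q ih =>
    have h1 : (8 * (q + 1))! ≤ (8 * (q + 1)) ^ 8 * (8 * q)! := by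
      have h := fact_add_le (8 * q) 8
      rwa [show 8 * q + 8 = 8 * (q + 1) by ring] at h
    calc (8 * (q + 1))! ≤ (8 * (q + 1)) ^ 8 * (8 * q)! := h1
      _ ≤ (8 * (q + 1)) ^ 8 * (8 ^ (8 * q) * (q !) ^ 8) := Nat.mul_le_mul_left _ ih
      _ = 8 ^ (8 * (q + 1)) * ((q + 1) * q !) ^ 8 := by ring
      _ = 8 ^ (8 * (q + 1)) * ((q + 1)!) ^ 8 := by rw [Nat.factorial_succ]

/-- the coefficient sequence -/
noncomputable def aSeq (n : ℕ) : ℝ :=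
  (Nat.doubleFactorial n : ℝ) / ((Nat.factorial (n / 8) : ℝ)) ^ 8

/-- the dominating sequence -/
noncomputable def dSeq (n : ℕ) : ℝ :=
  8 ^ n * ((n : ℝ) + 1) ^ 8 / Real.sqrt (n !)

private lemma aSeq_nonneg (n : ℕ) : 0 ≤ aSeq n := by
  unfold aSeq; positivity

private lemma sqrt_fact_pos (n : ℕ) : 0 < Real.sqrt (n !) :=
  Real.sqrt_pos.2 (by positivity)

private lemma dSeq_pos (n : ℕ) : 0 < dSeq n := by
  have h := sqrt_fact_pos n
  unfold dSeq
  positivity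

/-- key bound : `aSeq n ≤ dSeq n` for `n ≥ 1`. -/
private lemma aSeq_le_dSeq (n : ℕ) (hn : 1 ≤ n) : aSeq n ≤ dSeq n := by
  set q := n / 8 with hq
  have hnum : (Nat.doubleFactorial n : ℝ) ≤ Real.sqrt ((n + 1)!) := by
    rw [show (Nat.doubleFactorial n : ℝ) =
        Real.sqrt ((Nat.doubleFactorial n : ℝ) * (Nat.doubleFactorial n)) by
      rw [Real.sqrt_mul_self (by positivity)]]
    apply Real.sqrt_le_sqrt
    exact_mod_cast dfac_sq_le n
  have h8q : 8 * q ≤ n := by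
    have := Nat.div_mul_le_self n 8
    omega
  have hr7 : n - 8 * q ≤ 7 := by omega
  have hfact : (n !) ≤ n ^ 7 * (8 * q)! := by
    have h := fact_add_le (8 * q) (n - 8 * q)
    rw [show 8 * q + (n - 8 * q) = n by omega] at h
    calc n ! ≤ n ^ (n - 8 * q) * (8 * q)! := h
      _ ≤ n ^ 7 * (8 * q)! :=
        Nat.mul_le_mul_right _ (Nat.pow_le_pow_right hn hr7)
  have hden : ((n !) : ℝ) ≤ 8 ^ n * n ^ 7 * ((q !) : ℝ) ^ 8 := by
    have h1 : ((8 * q)! : ℝ) ≤ 8 ^ (8 * q) * ((q !) : ℝ) ^ 8 := by exact_mod_cast fact8 q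
    have h2 : ((n !) : ℝ) ≤ (n : ℝ) ^ 7 * ((8 * q)! : ℝ) := by exact_mod_cast hfact
    have h3 : (8 : ℝ) ^ (8 * q) ≤ 8 ^ n := pow_le_pow_right₀ (by norm_num) h8q
    calc ((n !) : ℝ) ≤ (n : ℝ) ^ 7 * ((8 * q)! : ℝ) := h2
      _ ≤ (n : ℝ) ^ 7 * (8 ^ (8 * q) * ((q !) : ℝ) ^ 8) :=
          mul_le_mul_of_nonneg_left h1 (by positivity)
      _ ≤ (n : ℝ) ^ 7 * (8 ^ n * ((q !) : ℝ) ^ 8) :=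
          mul_le_mul_of_nonneg_left (mul_le_mul_of_nonneg_right h3 (by positivity))
            (by positivity)
      _ = 8 ^ n * n ^ 7 * ((q !) : ℝ) ^ 8 := by ring
  have hqpos : (0 : ℝ) < ((q !) : ℝ) ^ 8 := by positivity
  have hs : Real.sqrt ((n !) : ℝ) * Real.sqrt ((n !) : ℝ) = ((n !) : ℝ) :=
    Real.mul_self_sqrt (by positivity)
  have hsn1 : Real.sqrt (((n + 1)!) : ℝ) = Real.sqrt ((n : ℝ) + 1) * Real.sqrt ((n !) : ℝ) := by
    rw [← Real.sqrt_mul (by positivity)]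
    congr 1
    rw [Nat.factorial_succ]
    push_cast
    ring
  rw [aSeq, dSeq, div_le_div_iff₀ hqpos (sqrt_fact_pos n)]
  calc (Nat.doubleFactorial n : ℝ) * Real.sqrt (n !)
      ≤ Real.sqrt ((n + 1)!) * Real.sqrt (n !) :=
        mul_le_mul_of_nonneg_right hnum (Real.sqrt_nonneg _)
    _ = Real.sqrt ((n : ℝ) + 1) * ((n !) : ℝ) := by rw [hsn1, mul_assoc, hs]
    _ ≤ Real.sqrt ((n : ℝ) + 1) * (8 ^ n * n ^ 7 * ((q !) : ℝ) ^ 8) :=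
        mul_le_mul_of_nonneg_left hden (Real.sqrt_nonneg _)
    _ ≤ ((n : ℝ) + 1) * (8 ^ n * ((n : ℝ) + 1) ^ 7 * ((q !) : ℝ) ^ 8) := by
        have h1 : Real.sqrt ((n : ℝ) + 1) ≤ (n : ℝ) + 1 :=
          (Real.sqrt_le_left (by positivity)).2 (by nlinarith [Nat.cast_nonneg (α := ℝ) n])
        have h2 : ((n : ℝ)) ^ 7 ≤ ((n : ℝ) + 1) ^ 7 :=
          pow_le_pow_left₀ (by positivity) (by linarith) 7
        have h3 : (0 : ℝ) ≤ 8 ^ n * n ^ 7 * ((q !) : ℝ) ^ 8 := by positivity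
        have h4 : 8 ^ n * (n : ℝ) ^ 7 * ((q !) : ℝ) ^ 8
            ≤ 8 ^ n * ((n : ℝ) + 1) ^ 7 * ((q !) : ℝ) ^ 8 := by
          apply mul_le_mul_of_nonneg_right (mul_le_mul_of_nonneg_left h2 (by positivity))
            (by positivity)
        have h5 : (0 : ℝ) ≤ Real.sqrt ((n : ℝ) + 1) := Real.sqrt_nonneg _
        nlinarith [mul_le_mul_of_nonneg_left h4 h5,
          mul_le_mul_of_nonneg_right h1 (le_trans h3 h4)]
    _ = 8 ^ n * ((n : ℝ) + 1) ^ 8 * ((q !) : ℝ) ^ 8 := by ring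

private lemma dSeq_summable : Summable dSeq := by
  apply summable_of_ratio_norm_eventually_le (r := 1 / 2) (by norm_num)
  filter_upwards [Filter.eventually_ge_atTop 16777216] with n hn
  have hd1 := dSeq_pos (n + 1)
  have hd0 := dSeq_pos n
  rw [Real.norm_of_nonneg hd1.le, Real.norm_of_nonneg hd0.le]
  unfold dSeq
  have hs : Real.sqrt (((n + 1)!) : ℝ) = Real.sqrt ((n : ℝ) + 1) * Real.sqrt ((n !) : ℝ) := by
    rw [← Real.sqrt_mul (by positivity)]
    congr 1
    rw [Nat.factorial_succ]; push_cast; ring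
  have ht : (4096 : ℝ) ≤ Real.sqrt ((n : ℝ) + 1) := by
    rw [show (4096 : ℝ) = Real.sqrt (4096 ^ 2) by rw [Real.sqrt_sq (by norm_num)]]
    apply Real.sqrt_le_sqrt
    have h : (16777216 : ℝ) ≤ (n : ℝ) := by exact_mod_cast hn
    nlinarith
  have htpos : (0 : ℝ) < Real.sqrt ((n : ℝ) + 1) := by linarith
  have hspos := sqrt_fact_pos n
  rw [hs, ← mul_div_assoc, div_le_div_iff₀ (by positivity) hspos]
  push_cast
  have h2 : ((n : ℝ) + 2) ^ 8 ≤ 256 * ((n : ℝ) + 1) ^ 8 := by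
    calc ((n : ℝ) + 2) ^ 8 ≤ (2 * ((n : ℝ) + 1)) ^ 8 :=
          pow_le_pow_left₀ (by positivity) (by linarith) 8
      _ = 256 * ((n : ℝ) + 1) ^ 8 := by ring
  have key : (8 : ℝ) * ((n : ℝ) + 2) ^ 8 ≤
      1 / 2 * ((n : ℝ) + 1) ^ 8 * Real.sqrt ((n : ℝ) + 1) := by
    have h3 : 1 / 2 * ((n : ℝ) + 1) ^ 8 * 4096 ≤
        1 / 2 * ((n : ℝ) + 1) ^ 8 * Real.sqrt ((n : ℝ) + 1) := by
      apply mul_le_mul_of_nonneg_left ht (by positivity)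
    nlinarith
  have hmul := mul_le_mul_of_nonneg_right key
    (show (0 : ℝ) ≤ 8 ^ n * Real.sqrt (n !) by positivity)
  rw [pow_succ]
  nlinarith [hmul]

theorem nonlinear_tail_bound :
    ∃ C : ℝ, 1 ≤ C ∧ ∀ E u v x : ℝ, 0 < E → 0 ≤ u → 0 ≤ v → 0 ≤ x → x * Real.sqrt E ≤ 1 →
      (∑' k : ℕ,
        x ^ (k + 3) * (Nat.doubleFactorial (k + 3) : ℝ) /
            ((Nat.factorial ((k + 3) / 8) : ℝ)) ^ 8 *
          (E ^ ((((k : ℝ) + 3) - 1) / 2) * u + E ^ ((((k : ℝ) + 3) - 2) / 2) * v))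
        ≤ C * x ^ 3 * (E * u + Real.sqrt E * v) := by
  have hasum : Summable (fun k : ℕ => aSeq (k + 3)) := by
    apply Summable.of_nonneg_of_le (fun k => aSeq_nonneg _)
      (fun k => aSeq_le_dSeq (k + 3) (by omega))
    exact (summable_nat_add_iff 3).2 dSeq_summable
  set S := ∑' k : ℕ, aSeq (k + 3) with hSdef
  have hS0 : 0 ≤ S := tsum_nonneg fun k => aSeq_nonneg _
  refine ⟨S + 1, by linarith, ?_⟩
  intro E u v x hE hu hv hx hxE
  have hsE : 0 < Real.sqrt E := Real.sqrt_pos.2 hE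
  set y := x * Real.sqrt E with hy
  have hy0 : 0 ≤ y := by positivity
  have hsqE : Real.sqrt E = E ^ ((1 : ℝ) / 2) := Real.sqrt_eq_rpow E
  have hterm : ∀ k : ℕ,
      x ^ (k + 3) * (Nat.doubleFactorial (k + 3) : ℝ) /
          ((Nat.factorial ((k + 3) / 8) : ℝ)) ^ 8 *
        (E ^ ((((k : ℝ) + 3) - 1) / 2) * u + E ^ ((((k : ℝ) + 3) - 2) / 2) * v)
      = (aSeq (k + 3) * y ^ k) * (x ^ 3 * (E * u + Real.sqrt E * v)) := by
    intro k
    have epow : E ^ (((k : ℝ)) / 2) = Real.sqrt E ^ k := by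
      rw [show ((k : ℝ)) / 2 = (1 / 2 : ℝ) * (k : ℝ) by ring, Real.rpow_mul hE.le,
        Real.rpow_natCast, hsqE]
    have e1 : E ^ ((((k : ℝ) + 3) - 1) / 2) = Real.sqrt E ^ k * E := by
      rw [show (((k : ℝ) + 3) - 1) / 2 = (k : ℝ) / 2 + 1 by ring, Real.rpow_add hE,
        Real.rpow_one, epow]
    have e2 : E ^ ((((k : ℝ) + 3) - 2) / 2) = Real.sqrt E ^ k * Real.sqrt E := by
      rw [show (((k : ℝ) + 3) - 2) / 2 = (k : ℝ) / 2 + 1 / 2 by ring, Real.rpow_add hE,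
        epow, ← hsqE]
    rw [e1, e2]
    simp only [aSeq, hy, mul_pow, pow_add]
    ring
  have hsum1 : Summable (fun k : ℕ => aSeq (k + 3) * y ^ k) := by
    apply Summable.of_nonneg_of_le
      (fun k => mul_nonneg (aSeq_nonneg _) (pow_nonneg hy0 k)) _ hasum
    intro k
    calc aSeq (k + 3) * y ^ k ≤ aSeq (k + 3) * 1 :=
          mul_le_mul_of_nonneg_left (pow_le_one₀ hy0 hxE) (aSeq_nonneg _)
      _ = aSeq (k + 3) := mul_one _
  have hP : (0 : ℝ) ≤ x ^ 3 * (E * u + Real.sqrt E * v) := by positivity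
  calc (∑' k : ℕ,
        x ^ (k + 3) * (Nat.doubleFactorial (k + 3) : ℝ) /
            ((Nat.factorial ((k + 3) / 8) : ℝ)) ^ 8 *
          (E ^ ((((k : ℝ) + 3) - 1) / 2) * u + E ^ ((((k : ℝ) + 3) - 2) / 2) * v))
      = (∑' k : ℕ, aSeq (k + 3) * y ^ k) * (x ^ 3 * (E * u + Real.sqrt E * v)) := by
        rw [← tsum_mul_right]
        exact tsum_congr hterm
    _ ≤ S * (x ^ 3 * (E * u + Real.sqrt E * v)) := by
        apply mul_le_mul_of_nonneg_right _ hP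
        apply Summable.tsum_le_tsum _ hsum1 hasum
        intro k
        calc aSeq (k + 3) * y ^ k ≤ aSeq (k + 3) * 1 :=
              mul_le_mul_of_nonneg_left (pow_le_one₀ hy0 hxE) (aSeq_nonneg _)
          _ = aSeq (k + 3) := mul_one _
    _ ≤ (S + 1) * x ^ 3 * (E * u + Real.sqrt E * v) := by nlinarith [hP]
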